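/- Let σ ∈ (0,1), and let η be a positive integer with (1+σ)^η > 2. Define μ_ν = 8^m c₀ μ_{ν-1}^{1+σ} (with c₀ ≥ 1, m ≥ 1, μ₀ ∈ (0, (8^m c₀ ζ)^{-1/σ}) for some ζ > 1) and K_{ν+1} = (⌊log(1/μ_ν)⌋ + 1)^{3η}. Then the series Σ_{ν=0}^∞ K_{ν+1}^{τ+1} μ_ν^{σ} converges for every fixed τ > 0. -/
import Mathlib

open Real Filter

theorem stmt19 (m η : ℕ) (hm : 1 ≤ m) (hη : 1 ≤ η) (σ c₀ ζ τ : ℝ)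
    (hσ : σ ∈ Set.Ioo (0 : ℝ) 1) (hησ : 2 < (1 + σ) ^ η) (hc₀ : 1 ≤ c₀)
    (hζ : 1 < ζ) (hτ : 0 < τ) (μ : ℕ → ℝ)
    (hμ0 : μ 0 ∈ Set.Ioo (0 : ℝ) ((8 ^ m * c₀ * ζ) ^ (-(1 / σ))))
    (hrec : ∀ ν : ℕ, μ (ν + 1) = 8 ^ m * c₀ * μ ν ^ (1 + σ)) :
    Summable (fun ν : ℕ =>
      (((Nat.floor (Real.log (1 / μ ν)) : ℝ) + 1) ^ (3 * η)) ^ (τ + 1) *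
        μ ν ^ σ) := by
  obtain ⟨hσ0, hσ1⟩ := hσ
  obtain ⟨hμ0pos, hμ0lt⟩ := hμ0
  set A : ℝ := 8 ^ m * c₀ with hA
  have hA1 : 1 ≤ A := by
    have h8 : (1:ℝ) ≤ 8 ^ m := one_le_pow₀ (by norm_num)
    calc (1:ℝ) = 1 * 1 := by ring
    _ ≤ 8 ^ m * c₀ := by apply mul_le_mul h8 hc₀ zero_le_one (by positivity)
  have hApos : 0 < A := lt_of_lt_of_le one_pos hA1
  set β : ℝ := A ^ (1/σ) * μ 0 with hβ
  have hβpos : 0 < β := mul_pos (Real.rpow_pos_of_pos hApos _) hμ0pos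
  have hβlt1 : β < 1 := by
    have h1 : β < A ^ (1/σ) * (A * ζ) ^ (-(1/σ)) := by
      exact mul_lt_mul_of_pos_left hμ0lt (Real.rpow_pos_of_pos hApos _)
    have h2 : (A * ζ) ^ (-(1/σ)) = A ^ (-(1/σ)) * ζ ^ (-(1/σ)) :=
      Real.mul_rpow hApos.le (by linarith)
    have h3 : A ^ (1/σ) * A ^ (-(1/σ)) = 1 := by
      rw [← Real.rpow_add hApos]; simp
    have h4 : ζ ^ (-(1/σ)) < 1 :=
      Real.rpow_lt_one_of_one_lt_of_neg hζ (by
        have : 0 < 1/σ := by positivity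
        linarith)
    calc β < A ^ (1/σ) * (A * ζ) ^ (-(1/σ)) := h1
    _ = (A ^ (1/σ) * A ^ (-(1/σ))) * ζ ^ (-(1/σ)) := by rw [h2]; ring
    _ = ζ ^ (-(1/σ)) := by rw [h3, one_mul]
    _ < 1 := h4
  -- exact formula
  have hform : ∀ ν : ℕ, μ ν = A ^ (-(1/σ)) * β ^ (((1+σ)^ν : ℝ)) := by
    intro ν
    induction ν with
    | zero =>
      simp only [pow_zero, Real.rpow_one, hβ]
      rw [← mul_assoc, ← Real.rpow_add hApos]
      simp
    | succ ν ih =>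
      rw [hrec ν, ih]
      rw [Real.mul_rpow (by positivity) (by positivity)]
      rw [← Real.rpow_natCast]
      rw [← Real.rpow_mul hApos.le, ← Real.rpow_mul hβpos.le]
      rw [Real.rpow_natCast]
      have e1 : -(1/σ) * (1+σ) = -(1/σ) + (-1) := by field_simp; ring
      rw [e1, Real.rpow_add hApos, ← mul_assoc, ← mul_assoc, Real.rpow_neg_one, pow_succ]
      have hAc : A * A ^ (-(1/σ)) * A⁻¹ = A ^ (-(1/σ)) := by
        field_simp
      rw [hAc]
  have hμpos : ∀ ν, 0 < μ ν := by
    intro ν; rw [hform ν]; positivity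
  have hepos : ∀ ν : ℕ, (0:ℝ) < (1+σ)^ν := fun ν => pow_pos (by linarith) ν
  have he1 : ∀ ν : ℕ, (1:ℝ) ≤ (1+σ)^ν := fun ν => one_le_pow₀ (by linarith)
  have hAinv_le : A ^ (-(1/σ)) ≤ 1 :=
    Real.rpow_le_one_of_one_le_of_nonpos hA1 (by
      have : 0 < 1/σ := by positivity
      linarith)
  have hμlt1 : ∀ ν, μ ν < 1 := by
    intro ν
    rw [hform ν]
    have hb : β ^ (((1+σ)^ν : ℝ)) < 1 :=
      Real.rpow_lt_one hβpos.le hβlt1 (hepos ν)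
    calc A ^ (-(1/σ)) * β ^ (((1+σ)^ν : ℝ)) ≤ 1 * β ^ (((1+σ)^ν : ℝ)) := by
          apply mul_le_mul_of_nonneg_right hAinv_le (by positivity)
    _ < 1 := by rwa [one_mul]
  set q : ℝ := β ^ σ with hq
  have hqpos : 0 < q := Real.rpow_pos_of_pos hβpos σ
  have hq1 : q < 1 := Real.rpow_lt_one hβpos.le hβlt1 hσ0
  -- bound on μ ν ^ σ
  have hμσ : ∀ ν, μ ν ^ σ ≤ q ^ ((1+σ)^ν : ℝ) := by
    intro ν
    rw [hform ν, Real.mul_rpow (by positivity) (by positivity)]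
    have h1 : (A ^ (-(1/σ))) ^ σ ≤ 1 :=
      Real.rpow_le_one (by positivity) hAinv_le hσ0.le
    have h2 : (β ^ (((1+σ)^ν : ℝ))) ^ σ = q ^ ((1+σ)^ν : ℝ) := by
      rw [hq, ← Real.rpow_mul hβpos.le, ← Real.rpow_mul hβpos.le, mul_comm]
    rw [h2]
    calc (A ^ (-(1/σ))) ^ σ * q ^ ((1+σ)^ν : ℝ) ≤ 1 * q ^ ((1+σ)^ν : ℝ) := by
          apply mul_le_mul_of_nonneg_right h1 (by positivity)
    _ = q ^ ((1+σ)^ν : ℝ) := one_mul _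
  -- bound on log
  set C : ℝ := (1/σ) * Real.log A - Real.log β with hC
  have hC0 : 0 ≤ C := by
    have h1 : 0 ≤ Real.log A := Real.log_nonneg hA1
    have h2 : Real.log β ≤ 0 := Real.log_nonpos hβpos.le hβlt1.le
    have h3 : 0 ≤ 1/σ := by positivity
    have := mul_nonneg h3 h1
    rw [hC]; linarith
  have hlog : ∀ ν, Real.log (1 / μ ν) ≤ C * ((1+σ)^ν : ℝ) := by
    intro ν
    rw [one_div, Real.log_inv, hform ν,
      Real.log_mul (by positivity) (by positivity),
      Real.log_rpow hApos, Real.log_rpow hβpos]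
    have h1 : -(-(1/σ) * Real.log A) ≤ (1/σ) * Real.log A * ((1+σ)^ν : ℝ) := by
      have h2 : 0 ≤ (1/σ) * Real.log A := mul_nonneg (by positivity) (Real.log_nonneg hA1)
      nlinarith [he1 ν]
    have h3 : -(((1+σ)^ν : ℝ) * Real.log β) = (-Real.log β) * ((1+σ)^ν : ℝ) := by ring
    rw [hC]; nlinarith [he1 ν]
  -- floor bound
  have hfloor : ∀ ν, ((Nat.floor (Real.log (1 / μ ν)) : ℝ) + 1) ≤ (C+1) * ((1+σ)^ν : ℝ) := by
    intro ν
    have hlognn : 0 ≤ Real.log (1 / μ ν) :=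
      Real.log_nonneg (one_le_one_div (hμpos ν) (hμlt1 ν).le)
    have h1 : (Nat.floor (Real.log (1 / μ ν)) : ℝ) ≤ Real.log (1 / μ ν) :=
      Nat.floor_le hlognn
    have := hlog ν
    nlinarith [he1 ν]
  -- define majorant
  set g : ℕ → ℝ := fun ν => (((C+1) * ((1+σ)^ν : ℝ)) ^ (3*η)) ^ (τ+1) * q ^ ((1+σ)^ν : ℝ)
    with hg
  have hgpos : ∀ ν, 0 < g ν := by
    intro ν
    have : 0 < (C+1) * ((1+σ)^ν : ℝ) := by positivity
    have := hqpos
    positivity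
  -- termwise bound
  have hbound : ∀ ν, (((Nat.floor (Real.log (1 / μ ν)) : ℝ) + 1) ^ (3 * η)) ^ (τ + 1) *
        μ ν ^ σ ≤ g ν := by
    intro ν
    apply mul_le_mul _ (hμσ ν) (Real.rpow_nonneg (hμpos ν).le σ) (by positivity)
    apply Real.rpow_le_rpow (by positivity) _ (by linarith)
    exact pow_le_pow_left₀ (by positivity) (hfloor ν) _
  -- summability of g via ratio test
  have hR : ∀ ν : ℕ,
      g (ν+1) = ((((1:ℝ)+σ) ^ (3*η)) ^ (τ+1) * q ^ (σ * ((1+σ)^ν : ℝ))) * g ν := by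
    intro ν
    rw [hg]
    simp only []
    have e1 : ((1:ℝ)+σ)^(ν+1) = (1+σ)^ν * (1+σ) := pow_succ _ _
    have e2 : (C+1) * ((1+σ)^(ν+1) : ℝ) = ((C+1) * ((1+σ)^ν : ℝ)) * (1+σ) := by
      rw [e1]; ring
    rw [e2, mul_pow, Real.mul_rpow (by positivity) (by positivity)]
    have e3 : q ^ ((1+σ)^(ν+1) : ℝ) = q ^ ((1+σ)^ν : ℝ) * q ^ (σ * ((1+σ)^ν : ℝ)) := by
      rw [← Real.rpow_add hqpos, e1]; ring_nf
    rw [e3]; ring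
  have htend : Tendsto (fun ν : ℕ => (((1:ℝ)+σ) ^ (3*η)) ^ (τ+1) * q ^ (σ * ((1+σ)^ν : ℝ)))
      atTop (nhds 0) := by
    have h1 : Tendsto (fun ν : ℕ => σ * ((1+σ)^ν : ℝ)) atTop atTop := by
      apply Tendsto.const_mul_atTop hσ0
      exact tendsto_pow_atTop_atTop_of_one_lt (by linarith)
    have h2 : Tendsto (fun x : ℝ => q ^ x) atTop (nhds 0) :=
      tendsto_rpow_atTop_of_base_lt_one q (by linarith) hq1
    have h3 := h2.comp h1
    have := h3.const_mul ((((1:ℝ)+σ) ^ (3*η)) ^ (τ+1))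
    simpa using this
  have hev : ∀ᶠ ν in atTop, ‖g (ν+1)‖ ≤ (1/2 : ℝ) * ‖g ν‖ := by
    have hhalf : ∀ᶠ ν in atTop,
        (((1:ℝ)+σ) ^ (3*η)) ^ (τ+1) * q ^ (σ * ((1+σ)^ν : ℝ)) ≤ 1/2 := by
      have := htend.eventually_le_const (show (0:ℝ) < 1/2 by norm_num)
      filter_upwards [this] with ν h using h
    filter_upwards [hhalf] with ν h
    rw [Real.norm_of_nonneg (hgpos (ν+1)).le, Real.norm_of_nonneg (hgpos ν).le, hR ν]
    exact mul_le_mul_of_nonneg_right h (hgpos ν).le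
  have hgsum : Summable g := summable_of_ratio_norm_eventually_le (by norm_num) hev
  exact Summable.of_nonneg_of_le (fun ν => mul_nonneg (by positivity) (Real.rpow_nonneg (hμpos ν).le σ)) hbound hgsum
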